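/- (Mean width of low-rank matrices) Let D = {X ∈ R^{d₁×d₂} : ‖X‖_F = 1, rank(X) ≤ r}. Then the Gaussian mean width satisfies w(D) ≤ 2√(2r(d₁+d₂)) (assuming Gordon's bound E‖G‖ ≤ √d₁+√d₂). -/

import Mathlib

open MeasureTheory ProbabilityTheory Real
open scoped Pointwise

/-- The singular values of a real `d₁ × d₂` matrix `X`: the square roots of the
eigenvalues of `Xᴴ * X = Xᵀ * X`. -/
noncomputable def singVals {d₁ d₂ : ℕ} (X : Matrix (Fin d₁) (Fin d₂) ℝ) : Fin d₂ → ℝ :=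
  fun i => Real.sqrt ((show (X.transpose * X).IsHermitian by
    simpa [Matrix.conjTranspose_eq_transpose_of_trivial] using
      Matrix.isHermitian_conjTranspose_mul_self X).eigenvalues i)

/-- Nuclear norm: sum of singular values. -/
noncomputable def nucNorm {d₁ d₂ : ℕ} (X : Matrix (Fin d₁) (Fin d₂) ℝ) : ℝ :=
  ∑ i, singVals X i

/-- Frobenius norm. -/
noncomputable def frobNorm {d₁ d₂ : ℕ} (X : Matrix (Fin d₁) (Fin d₂) ℝ) : ℝ :=
  Real.sqrt (∑ i, ∑ j, (X i j) ^ 2)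

/-- Operator (spectral) norm: the largest singular value. -/
noncomputable def opNorm {d₁ d₂ : ℕ} (X : Matrix (Fin d₁) (Fin d₂) ℝ) : ℝ :=
  ⨆ i, singVals X i

/-- Standard Gaussian measure on `d₁ × d₂` matrices (i.i.d. `N(0,1)` entries). -/
noncomputable def gaussMat (d₁ d₂ : ℕ) : Measure (Fin d₁ → Fin d₂ → ℝ) :=
  Measure.pi fun _ => Measure.pi fun _ => ProbabilityTheory.gaussianReal 0 1

/-- Gaussian mean width of a set of `d₁ × d₂` matrices, with the trace inner product
`⟨G, X⟩ = ∑ᵢⱼ Gᵢⱼ Xᵢⱼ`. -/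
noncomputable def matMeanWidth {d₁ d₂ : ℕ} (K : Set (Matrix (Fin d₁) (Fin d₂) ℝ)) : ℝ :=
  ∫ G, sSup ((fun X : Matrix (Fin d₁) (Fin d₂) ℝ => ∑ i, ∑ j, G i j * X i j) '' (K - K))
    ∂(gaussMat d₁ d₂)

theorem Matrix.isHermitian_transpose_mul_self {d₁ d₂ : ℕ} (X : Matrix (Fin d₁) (Fin d₂) ℝ) :
    (X.transpose * X).IsHermitian := by
  simpa [Matrix.conjTranspose_eq_transpose_of_trivial] using
    Matrix.isHermitian_conjTranspose_mul_self X

namespace Stmt17Aux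

open Matrix Finset

variable {d₁ d₂ : ℕ}

lemma ev_nonneg (X : Matrix (Fin d₁) (Fin d₂) ℝ) (i : Fin d₂) :
    0 ≤ (Matrix.isHermitian_transpose_mul_self X).eigenvalues i :=
  (Matrix.posSemidef_conjTranspose_mul_self X).eigenvalues_nonneg i

lemma singVals_nonneg (X : Matrix (Fin d₁) (Fin d₂) ℝ) (i : Fin d₂) : 0 ≤ singVals X i :=
  Real.sqrt_nonneg _

lemma sq_singVals (X : Matrix (Fin d₁) (Fin d₂) ℝ) (i : Fin d₂) :
    singVals X i ^ 2 = (Matrix.isHermitian_transpose_mul_self X).eigenvalues i :=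
  Real.sq_sqrt (ev_nonneg X i)

lemma sum_ev (A : Matrix (Fin d₂) (Fin d₂) ℝ) (hA : A.IsHermitian) :
    ∑ i, hA.eigenvalues i = A.trace := by
  rw [hA.trace_eq_sum_eigenvalues]
  simp

lemma sum_sq_singVals (X : Matrix (Fin d₁) (Fin d₂) ℝ) :
    ∑ i, singVals X i ^ 2 = ∑ i, ∑ j, X i j ^ 2 := by
  simp only [sq_singVals]
  rw [sum_ev _ (Matrix.isHermitian_transpose_mul_self X)]
  rw [Matrix.trace]
  simp only [Matrix.diag_apply, Matrix.mul_apply, Matrix.transpose_apply]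
  rw [Finset.sum_comm]
  simp [sq]

lemma hUU (A : Matrix (Fin d₂) (Fin d₂) ℝ) (hA : A.IsHermitian) (j j' : Fin d₂) :
    ∑ k, (hA.eigenvectorBasis k : EuclideanSpace ℝ (Fin d₂)) j
        * (hA.eigenvectorBasis k : EuclideanSpace ℝ (Fin d₂)) j'
      = if j = j' then (1:ℝ) else 0 := by
  have h1 : (hA.eigenvectorUnitary : Matrix (Fin d₂) (Fin d₂) ℝ)
      * star (hA.eigenvectorUnitary : Matrix (Fin d₂) (Fin d₂) ℝ) = 1 :=
    (Matrix.mem_unitaryGroup_iff).mp hA.eigenvectorUnitary.2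
  have := congrFun (congrFun h1 j) j'
  simpa [Matrix.mul_apply, Matrix.one_apply, Matrix.star_apply, mul_comm] using this

lemma core (v : Fin d₂ → Fin d₂ → ℝ)
    (hv : ∀ j j', ∑ k, v k j * v k j' = if j = j' then (1:ℝ) else 0)
    (x y : Fin d₂ → ℝ) :
    ∑ k, (x ⬝ᵥ v k) * (y ⬝ᵥ v k) = x ⬝ᵥ y := by
  simp only [dotProduct, Finset.sum_mul, Finset.mul_sum]
  rw [Finset.sum_comm]
  refine Finset.sum_congr rfl fun j _ => ?_
  rw [Finset.sum_comm]
  have : ∀ j' : Fin d₂, ∑ k, x j' * v k j' * (y j * v k j)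
      = x j' * y j * (if j' = j then (1:ℝ) else 0) := by
    intro j'
    rw [← hv j' j, Finset.mul_sum]
    exact Finset.sum_congr rfl fun k _ => by ring
  rw [Finset.sum_congr rfl fun j' _ => this j']
  simp [Finset.sum_ite_eq', mul_comm]

lemma vk_norm (A : Matrix (Fin d₂) (Fin d₂) ℝ) (hA : A.IsHermitian) (k : Fin d₂) :
    (fun j => (hA.eigenvectorBasis k : EuclideanSpace ℝ (Fin d₂)) j) ⬝ᵥ
      (fun j => (hA.eigenvectorBasis k : EuclideanSpace ℝ (Fin d₂)) j) = 1 := by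
  have h := hA.eigenvectorBasis.orthonormal.1 k
  have h2 : (inner ℝ (hA.eigenvectorBasis k) (hA.eigenvectorBasis k) : ℝ) = 1 := by
    rw [real_inner_self_eq_norm_sq, h]; norm_num
  rw [← h2]
  simp [PiLp.inner_apply, dotProduct]
  rw [← h2, PiLp.inner_apply]
  simp [sq]

lemma mulVec_sq (X : Matrix (Fin d₁) (Fin d₂) ℝ) (v : Fin d₂ → ℝ) :
    (X *ᵥ v) ⬝ᵥ (X *ᵥ v) = v ⬝ᵥ ((Xᵀ * X) *ᵥ v) := by
  rw [← Matrix.mulVec_mulVec, Matrix.dotProduct_mulVec v, Matrix.vecMul_transpose]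

lemma Av_sq (X : Matrix (Fin d₁) (Fin d₂) ℝ) (k : Fin d₂) :
    (X *ᵥ (fun j => ((Matrix.isHermitian_transpose_mul_self X).eigenvectorBasis k
        : EuclideanSpace ℝ (Fin d₂)) j)) ⬝ᵥ
    (X *ᵥ (fun j => ((Matrix.isHermitian_transpose_mul_self X).eigenvectorBasis k
        : EuclideanSpace ℝ (Fin d₂)) j))
      = (Matrix.isHermitian_transpose_mul_self X).eigenvalues k := by
  set hX := Matrix.isHermitian_transpose_mul_self X
  rw [mulVec_sq]
  have h := hX.mulVec_eigenvectorBasis k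
  show (fun j => (hX.eigenvectorBasis k : EuclideanSpace ℝ (Fin d₂)) j) ⬝ᵥ
    ((Xᵀ * X) *ᵥ fun j => (hX.eigenvectorBasis k : EuclideanSpace ℝ (Fin d₂)) j) = _
  rw [show ((Xᵀ * X) *ᵥ fun j => (hX.eigenvectorBasis k : EuclideanSpace ℝ (Fin d₂)) j)
      = hX.eigenvalues k • (fun j => (hX.eigenvectorBasis k : EuclideanSpace ℝ (Fin d₂)) j) from h]
  rw [dotProduct_smul]
  rw [vk_norm _ hX k]
  simp

lemma opNorm_nonneg (X : Matrix (Fin d₁) (Fin d₂) ℝ) : 0 ≤ opNorm X :=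
  Real.iSup_nonneg fun _ => Real.sqrt_nonneg _

lemma singVals_le_opNorm (X : Matrix (Fin d₁) (Fin d₂) ℝ) (k : Fin d₂) :
    singVals X k ≤ opNorm X :=
  le_ciSup (Set.Finite.bddAbove (Set.finite_range _)) k

lemma ev_le_opNorm_sq (X : Matrix (Fin d₁) (Fin d₂) ℝ) (k : Fin d₂) :
    (Matrix.isHermitian_transpose_mul_self X).eigenvalues k ≤ opNorm X ^ 2 := by
  rw [← sq_singVals]
  exact pow_le_pow_left₀ (Real.sqrt_nonneg _) (singVals_le_opNorm X k) 2

lemma quad_bound (X : Matrix (Fin d₁) (Fin d₂) ℝ) (x : Fin d₂ → ℝ) :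
    (X *ᵥ x) ⬝ᵥ (X *ᵥ x) ≤ opNorm X ^ 2 * (x ⬝ᵥ x) := by
  set hX := Matrix.isHermitian_transpose_mul_self X with hhX
  set v : Fin d₂ → Fin d₂ → ℝ :=
    fun k => fun j => (hX.eigenvectorBasis k : EuclideanSpace ℝ (Fin d₂)) j with hv
  have hvv : ∀ j j', ∑ k, v k j * v k j' = if j = j' then (1:ℝ) else 0 := hUU _ hX
  rw [mulVec_sq]
  have h1 : x ⬝ᵥ ((Xᵀ * X) *ᵥ x) = ∑ k, hX.eigenvalues k * (x ⬝ᵥ v k) ^ 2 := by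
    rw [← core v hvv x ((Xᵀ * X) *ᵥ x)]
    refine Finset.sum_congr rfl fun k _ => ?_
    have hMT : (Xᵀ * X)ᵀ = Xᵀ * X := by
      rw [Matrix.transpose_mul, Matrix.transpose_transpose]
    have h2 : ((Xᵀ * X) *ᵥ x) ⬝ᵥ v k = x ⬝ᵥ ((Xᵀ * X) *ᵥ v k) := by
      calc ((Xᵀ * X) *ᵥ x) ⬝ᵥ v k = v k ⬝ᵥ ((Xᵀ * X) *ᵥ x) := dotProduct_comm _ _
        _ = (v k ᵥ* (Xᵀ * X)) ⬝ᵥ x := Matrix.dotProduct_mulVec _ _ _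
        _ = ((Xᵀ * X) *ᵥ v k) ⬝ᵥ x := by
              conv_lhs => rw [← hMT, Matrix.vecMul_transpose]
        _ = x ⬝ᵥ ((Xᵀ * X) *ᵥ v k) := dotProduct_comm _ _
    rw [h2, show (Xᵀ * X) *ᵥ v k = hX.eigenvalues k • v k from hX.mulVec_eigenvectorBasis k,
      dotProduct_smul]
    simp [smul_eq_mul]; ring
  have h3 : x ⬝ᵥ x = ∑ k, (x ⬝ᵥ v k) ^ 2 := by
    rw [← core v hvv x x]; simp [sq]
  rw [h1, h3, Finset.mul_sum]
  refine Finset.sum_le_sum fun k _ => ?_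
  exact mul_le_mul_of_nonneg_right (ev_le_opNorm_sq X k) (sq_nonneg _)

lemma cs (x y : Fin d₁ → ℝ) :
    x ⬝ᵥ y ≤ Real.sqrt (x ⬝ᵥ x) * Real.sqrt (y ⬝ᵥ y) := by
  simpa [dotProduct, sq] using Real.sum_mul_le_sqrt_mul_sqrt Finset.univ x y

lemma Gv_le (G : Matrix (Fin d₁) (Fin d₂) ℝ) (x : Fin d₂ → ℝ) (hx : x ⬝ᵥ x = 1) :
    Real.sqrt ((G *ᵥ x) ⬝ᵥ (G *ᵥ x)) ≤ opNorm G := by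
  have := quad_bound G x
  rw [hx, mul_one] at this
  calc Real.sqrt ((G *ᵥ x) ⬝ᵥ (G *ᵥ x)) ≤ Real.sqrt (opNorm G ^ 2) :=
        Real.sqrt_le_sqrt this
    _ = opNorm G := Real.sqrt_sq (opNorm_nonneg G)

lemma dual (G A : Matrix (Fin d₁) (Fin d₂) ℝ) :
    ∑ i, ∑ j, G i j * A i j ≤ opNorm G * nucNorm A := by
  set hA := Matrix.isHermitian_transpose_mul_self A with hhA
  set v : Fin d₂ → Fin d₂ → ℝ :=
    fun k => fun j => (hA.eigenvectorBasis k : EuclideanSpace ℝ (Fin d₂)) j with hv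
  have hvv : ∀ j j', ∑ k, v k j * v k j' = if j = j' then (1:ℝ) else 0 := hUU _ hA
  have key : ∑ i, ∑ j, G i j * A i j = ∑ k, (G *ᵥ v k) ⬝ᵥ (A *ᵥ v k) := by
    have h1 : ∀ i, ∑ j, G i j * A i j
        = ∑ k, ((fun j => G i j) ⬝ᵥ v k) * ((fun j => A i j) ⬝ᵥ v k) := fun i =>
      (core v hvv _ _).symm
    rw [Finset.sum_congr rfl fun i _ => h1 i, Finset.sum_comm]
    rfl
  rw [key]
  have hterm : ∀ k, (G *ᵥ v k) ⬝ᵥ (A *ᵥ v k) ≤ opNorm G * singVals A k := by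
    intro k
    calc (G *ᵥ v k) ⬝ᵥ (A *ᵥ v k)
        ≤ Real.sqrt ((G *ᵥ v k) ⬝ᵥ (G *ᵥ v k)) * Real.sqrt ((A *ᵥ v k) ⬝ᵥ (A *ᵥ v k)) :=
          cs _ _
      _ ≤ opNorm G * singVals A k := by
          have h2 : Real.sqrt ((A *ᵥ v k) ⬝ᵥ (A *ᵥ v k)) = singVals A k := by
            rw [show (A *ᵥ v k) ⬝ᵥ (A *ᵥ v k) = hA.eigenvalues k from Av_sq A k]
            rfl
          rw [h2]
          exact mul_le_mul_of_nonneg_right (Gv_le G (v k) (vk_norm _ hA k))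
            (Real.sqrt_nonneg _)
  calc ∑ k, (G *ᵥ v k) ⬝ᵥ (A *ᵥ v k) ≤ ∑ k, opNorm G * singVals A k :=
        Finset.sum_le_sum fun k _ => hterm k
    _ = opNorm G * nucNorm A := by rw [nucNorm, Finset.mul_sum]

lemma singVals_congr {X Y : Matrix (Fin d₁) (Fin d₂) ℝ} (h : Xᵀ * X = Yᵀ * Y) :
    singVals X = singVals Y := by
  have key : ∀ (M N : Matrix (Fin d₂) (Fin d₂) ℝ) (hM : M.IsHermitian) (hN : N.IsHermitian),
      M = N → hM.eigenvalues = hN.eigenvalues := by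
    rintro M N hM hN rfl; rfl
  unfold singVals
  have hXY : (Xᴴ * X : Matrix (Fin d₂) (Fin d₂) ℝ) = Yᴴ * Y := h
  rw [key _ _ (Matrix.isHermitian_transpose_mul_self X)
    (Matrix.isHermitian_transpose_mul_self Y) hXY]

lemma nucNorm_neg (A : Matrix (Fin d₁) (Fin d₂) ℝ) : nucNorm (-A) = nucNorm A := by
  unfold nucNorm
  rw [singVals_congr (X := -A) (Y := A) (by simp)]

lemma nuc_le {r : ℕ} (A : Matrix (Fin d₁) (Fin d₂) ℝ) (hf : frobNorm A = 1)
    (hr : A.rank ≤ r) : nucNorm A ≤ Real.sqrt r := by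
  have hsum : ∑ i, ∑ j, A i j ^ 2 = 1 := by
    have h0 : (0:ℝ) ≤ ∑ i, ∑ j, A i j ^ 2 :=
      Finset.sum_nonneg fun _ _ => Finset.sum_nonneg fun _ _ => sq_nonneg _
    have := hf
    unfold frobNorm at this
    nlinarith [Real.sq_sqrt h0]
  have hsv : ∑ i, singVals A i ^ 2 = 1 := by rw [sum_sq_singVals, hsum]
  set T : Finset (Fin d₂) := Finset.univ.filter (fun i => singVals A i ≠ 0) with hT
  have hcard : T.card ≤ r := by
    have h1 : (Aᵀ * A).rank
        = Fintype.card {i // (Matrix.isHermitian_transpose_mul_self A).eigenvalues i ≠ 0} :=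
      (Matrix.isHermitian_transpose_mul_self A).rank_eq_card_non_zero_eigs
    have h2 : (Aᵀ * A).rank = A.rank := Matrix.rank_transpose_mul_self A
    have h3 : ∀ i, singVals A i ≠ 0 ↔
        (Matrix.isHermitian_transpose_mul_self A).eigenvalues i ≠ 0 := by
      intro i
      unfold singVals
      rw [not_iff_not]
      constructor
      · intro h
        have h4 := ev_nonneg A i
        have h5 := Real.sqrt_eq_zero'.mp h
        linarith
      · intro h; rw [h, Real.sqrt_zero]
    have h5 : T.card
        = Fintype.card {i // (Matrix.isHermitian_transpose_mul_self A).eigenvalues i ≠ 0} := by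
      rw [Fintype.card_subtype]
      apply Finset.card_bij (fun a _ => a) <;> simp [hT, h3]
    rw [h5, ← h1, h2] at *
    exact hr
  have hTsum : nucNorm A = ∑ i ∈ T, singVals A i := by
    unfold nucNorm
    rw [← Finset.sum_filter_ne_zero]
  have hsq : (∑ i ∈ T, singVals A i) ^ 2 ≤ (r : ℝ) := by
    calc (∑ i ∈ T, singVals A i) ^ 2 ≤ T.card * ∑ i ∈ T, singVals A i ^ 2 :=
          sq_sum_le_card_mul_sum_sq
      _ ≤ (r : ℝ) * 1 := by
          apply mul_le_mul (by exact_mod_cast hcard)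
          · calc ∑ i ∈ T, singVals A i ^ 2 ≤ ∑ i, singVals A i ^ 2 :=
                Finset.sum_le_sum_of_subset_of_nonneg (Finset.filter_subset _ _)
                  (fun _ _ _ => sq_nonneg _)
              _ = 1 := hsv
          · exact Finset.sum_nonneg fun _ _ => sq_nonneg _
          · exact Nat.cast_nonneg _
      _ = (r : ℝ) := mul_one _
  rw [hTsum]
  have hnn : 0 ≤ ∑ i ∈ T, singVals A i :=
    Finset.sum_nonneg fun _ _ => Real.sqrt_nonneg _
  calc ∑ i ∈ T, singVals A i = Real.sqrt ((∑ i ∈ T, singVals A i) ^ 2) :=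
        (Real.sqrt_sq hnn).symm
    _ ≤ Real.sqrt r := Real.sqrt_le_sqrt hsq

lemma opNorm_le_sum_abs (G : Matrix (Fin d₁) (Fin d₂) ℝ) :
    opNorm G ≤ ∑ i, ∑ j, |G i j| := by
  have habs : (0:ℝ) ≤ ∑ i, ∑ j, |G i j| :=
    Finset.sum_nonneg fun _ _ => Finset.sum_nonneg fun _ _ => abs_nonneg _
  refine Real.iSup_le (fun k => ?_) habs
  have h1 : singVals G k ^ 2 ≤ ∑ i, singVals G i ^ 2 :=
    Finset.single_le_sum (f := fun i => singVals G i ^ 2) (fun _ _ => sq_nonneg _)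
      (Finset.mem_univ k)
  have h2 : ∑ i, ∑ j, G i j ^ 2 ≤ (∑ i, ∑ j, |G i j|) ^ 2 := by
    have := Finset.sum_sq_le_sq_sum_of_nonneg
      (s := Finset.univ ×ˢ Finset.univ) (f := fun p : Fin d₁ × Fin d₂ => |G p.1 p.2|)
      (fun _ _ => abs_nonneg _)
    simpa [Fintype.sum_prod_type, Finset.sum_product, sq_abs] using this
  have h3 : singVals G k ^ 2 ≤ (∑ i, ∑ j, |G i j|) ^ 2 := by
    rw [sum_sq_singVals] at h1; linarith
  calc singVals G k = Real.sqrt (singVals G k ^ 2) :=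
        (Real.sqrt_sq (Real.sqrt_nonneg _)).symm
    _ ≤ Real.sqrt ((∑ i, ∑ j, |G i j|) ^ 2) := Real.sqrt_le_sqrt h3
    _ = ∑ i, ∑ j, |G i j| := Real.sqrt_sq habs

noncomputable def LL (d₁ d₂ : ℕ) : Matrix (Fin d₁) (Fin d₂) ℝ →ₗ[ℝ]
    (EuclideanSpace ℝ (Fin d₂) →L[ℝ] EuclideanSpace ℝ (Fin d₁)) :=
  (LinearMap.toContinuousLinearMap.toLinearMap).comp Matrix.toEuclideanLin.toLinearMap

lemma LL_apply_norm (G : Matrix (Fin d₁) (Fin d₂) ℝ) (x : EuclideanSpace ℝ (Fin d₂)) :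
    ‖(LL d₁ d₂ G) x‖ = Real.sqrt ((G *ᵥ ⇑x) ⬝ᵥ (G *ᵥ ⇑x)) := by
  have h1 : (LL d₁ d₂ G) x = Matrix.toEuclideanLin G x := rfl
  rw [h1]
  rw [EuclideanSpace.norm_eq]
  congr 1
  simp [Matrix.toEuclideanLin_apply, dotProduct, sq_abs, sq]

lemma euclid_norm (x : EuclideanSpace ℝ (Fin d₂)) :
    ‖x‖ = Real.sqrt (⇑x ⬝ᵥ ⇑x) := by
  rw [EuclideanSpace.norm_eq]
  congr 1
  simp [dotProduct, sq_abs, sq]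

lemma opNorm_eq_norm (G : Matrix (Fin d₁) (Fin d₂) ℝ) :
    opNorm G = ‖LL d₁ d₂ G‖ := by
  apply le_antisymm
  · refine Real.iSup_le (fun k => ?_) (norm_nonneg _)
    set hG := Matrix.isHermitian_transpose_mul_self G
    have h1 : singVals G k = ‖(LL d₁ d₂ G) (hG.eigenvectorBasis k)‖ := by
      rw [LL_apply_norm]
      show Real.sqrt (hG.eigenvalues k) = _
      rw [show (G *ᵥ ⇑(hG.eigenvectorBasis k)) ⬝ᵥ (G *ᵥ ⇑(hG.eigenvectorBasis k))
          = hG.eigenvalues k from Av_sq G k]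
    rw [h1]
    calc ‖(LL d₁ d₂ G) (hG.eigenvectorBasis k)‖
        ≤ ‖LL d₁ d₂ G‖ * ‖hG.eigenvectorBasis k‖ := (LL d₁ d₂ G).le_opNorm _
      _ = ‖LL d₁ d₂ G‖ := by rw [hG.eigenvectorBasis.orthonormal.1 k, mul_one]
  · refine ContinuousLinearMap.opNorm_le_bound _ (opNorm_nonneg G) fun x => ?_
    rw [LL_apply_norm, euclid_norm]
    calc Real.sqrt ((G *ᵥ ⇑x) ⬝ᵥ (G *ᵥ ⇑x))
        ≤ Real.sqrt (opNorm G ^ 2 * (⇑x ⬝ᵥ ⇑x)) := Real.sqrt_le_sqrt (quad_bound G ⇑x)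
      _ = opNorm G * Real.sqrt (⇑x ⬝ᵥ ⇑x) := by
          rw [Real.sqrt_mul (sq_nonneg _), Real.sqrt_sq (opNorm_nonneg G)]

lemma measurable_opNorm :
    Measurable (fun G : Fin d₁ → Fin d₂ → ℝ => opNorm (Matrix.of G)) := by
  have h1 : (fun G : Fin d₁ → Fin d₂ → ℝ => opNorm (Matrix.of G))
      = fun G => ‖LL d₁ d₂ (Matrix.of G)‖ := funext fun G => opNorm_eq_norm _
  rw [h1]
  have h2 : Continuous fun G : Fin d₁ → Fin d₂ → ℝ => LL d₁ d₂ (Matrix.of G) :=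
    (LL d₁ d₂).continuous_of_finiteDimensional
  exact (continuous_norm.comp h2).measurable

lemma map_eval_pi {ι : Type*} [Fintype ι] [DecidableEq ι] {α : ι → Type*}
    [∀ i, MeasurableSpace (α i)] (μ : ∀ i, Measure (α i)) [∀ i, IsProbabilityMeasure (μ i)]
    (i : ι) : (Measure.pi μ).map (Function.eval i) = μ i := by
  ext s hs
  rw [Measure.map_apply (measurable_pi_apply i) hs]
  have hpre : Function.eval i ⁻¹' s
      = Set.pi Set.univ (Function.update (fun j => Set.univ) i s) := by
    ext x
    simp [Set.mem_pi, Function.update]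
    constructor
    · intro hx j
      by_cases hj : j = i
      · subst hj; simpa using hx
      · simp [hj]
    · intro hx
      have := hx i
      simpa using this
  rw [hpre, Measure.pi_pi]
  rw [Finset.prod_eq_single i]
  · simp
  · intro j _ hj; simp [Function.update, hj]
  · simp

lemma integrable_id_gauss : Integrable (fun x : ℝ => x) (gaussianReal 0 1) := by
  rw [gaussianReal_of_var_ne_zero 0 one_ne_zero]
  rw [integrable_withDensity_iff (measurable_gaussianPDF 0 1)]
  · have heq : (fun x : ℝ => x * (gaussianPDF 0 1 x).toReal)
        = fun x => (Real.sqrt (2 * Real.pi))⁻¹ * (x ^ (1:ℝ) * Real.exp (-(2:ℝ)⁻¹ * x ^ 2)) := by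
      ext x
      rw [gaussianPDF, ENNReal.toReal_ofReal (gaussianPDFReal_nonneg _ _ _)]
      rw [gaussianPDFReal]
      rw [Real.rpow_one]
      push_cast
      ring_nf
    rw [heq]
    exact (integrable_rpow_mul_exp_neg_mul_sq (by norm_num) (by norm_num)).const_mul _
  · exact ae_of_all _ fun x => ENNReal.ofReal_lt_top

lemma integrable_coord (i : Fin d₁) (j : Fin d₂) :
    Integrable (fun G : Fin d₁ → Fin d₂ → ℝ => G i j) (gaussMat d₁ d₂) := by
  have h1 : (gaussMat d₁ d₂).map (Function.eval i)
      = Measure.pi fun _ : Fin d₂ => gaussianReal 0 1 := map_eval_pi _ i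
  have h2 : ((Measure.pi fun _ : Fin d₂ => gaussianReal 0 1).map (Function.eval j))
      = gaussianReal 0 1 := map_eval_pi _ j
  have h3 : Integrable (fun x : Fin d₂ → ℝ => x j)
      (Measure.pi fun _ : Fin d₂ => gaussianReal 0 1) := by
    have := (integrable_map_measure (f := Function.eval j) (g := fun x : ℝ => x)
      measurable_id.aestronglyMeasurable (measurable_pi_apply j).aemeasurable
      (μ := Measure.pi fun _ : Fin d₂ => gaussianReal 0 1)).mp
    rw [h2] at this
    exact this integrable_id_gauss
  have := (integrable_map_measure (f := Function.eval i) (g := fun x : Fin d₂ → ℝ => x j)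
    ((measurable_pi_apply j).aestronglyMeasurable) (measurable_pi_apply i).aemeasurable
    (μ := gaussMat d₁ d₂)).mp
  rw [h1] at this
  exact this h3

lemma integrable_opNorm :
    Integrable (fun G : Fin d₁ → Fin d₂ → ℝ => opNorm (Matrix.of G)) (gaussMat d₁ d₂) := by
  have hg : Integrable (fun G : Fin d₁ → Fin d₂ → ℝ => ∑ i, ∑ j, |G i j|) (gaussMat d₁ d₂) := by
    apply integrable_finset_sum
    intro i _
    apply integrable_finset_sum
    intro j _
    exact (integrable_coord i j).abs
  refine hg.mono' measurable_opNorm.aestronglyMeasurable (ae_of_all _ fun G => ?_)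
  rw [Real.norm_eq_abs, abs_of_nonneg (opNorm_nonneg _)]
  exact opNorm_le_sum_abs _

end Stmt17Aux

theorem stmt17 {d₁ d₂ : ℕ} (r : ℕ)
    (hGordon : (∫ G, opNorm (Matrix.of G) ∂(gaussMat d₁ d₂)) ≤ Real.sqrt d₁ + Real.sqrt d₂) :
    matMeanWidth {X : Matrix (Fin d₁) (Fin d₂) ℝ | frobNorm X = 1 ∧ X.rank ≤ r}
      ≤ 2 * Real.sqrt (2 * r * (d₁ + d₂)) := by
  classical
  set K : Set (Matrix (Fin d₁) (Fin d₂) ℝ) := {X | frobNorm X = 1 ∧ X.rank ≤ r} with hK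
  set f : (Fin d₁ → Fin d₂ → ℝ) → ℝ := fun G =>
    sSup ((fun X : Matrix (Fin d₁) (Fin d₂) ℝ => ∑ i, ∑ j, G i j * X i j) '' (K - K)) with hf
  -- pointwise bound
  have hub : ∀ G : Fin d₁ → Fin d₂ → ℝ, ∀ y ∈
      ((fun X : Matrix (Fin d₁) (Fin d₂) ℝ => ∑ i, ∑ j, G i j * X i j) '' (K - K)),
      y ≤ 2 * Real.sqrt r * opNorm (Matrix.of G) := by
    intro G y hy
    obtain ⟨X, hX, rfl⟩ := hy
    obtain ⟨A, hA, B, hB, rfl⟩ := hX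
    have hGA : ∑ i, ∑ j, G i j * A i j ≤ Real.sqrt r * opNorm (Matrix.of G) := by
      calc ∑ i, ∑ j, G i j * A i j ≤ opNorm (Matrix.of G) * nucNorm A :=
            Stmt17Aux.dual (Matrix.of G) A
        _ ≤ opNorm (Matrix.of G) * Real.sqrt r := by
            exact mul_le_mul_of_nonneg_left (Stmt17Aux.nuc_le A hA.1 hA.2)
              (Stmt17Aux.opNorm_nonneg _)
        _ = Real.sqrt r * opNorm (Matrix.of G) := mul_comm _ _
    have hGB : -(∑ i, ∑ j, G i j * B i j) ≤ Real.sqrt r * opNorm (Matrix.of G) := by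
      have h1 : ∑ i, ∑ j, G i j * (-B) i j = -(∑ i, ∑ j, G i j * B i j) := by
        simp [Finset.sum_neg_distrib, mul_neg]
      calc -(∑ i, ∑ j, G i j * B i j) = ∑ i, ∑ j, G i j * (-B) i j := h1.symm
        _ ≤ opNorm (Matrix.of G) * nucNorm (-B) := Stmt17Aux.dual (Matrix.of G) (-B)
        _ = opNorm (Matrix.of G) * nucNorm B := by rw [Stmt17Aux.nucNorm_neg]
        _ ≤ opNorm (Matrix.of G) * Real.sqrt r :=
            mul_le_mul_of_nonneg_left (Stmt17Aux.nuc_le B hB.1 hB.2)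
              (Stmt17Aux.opNorm_nonneg _)
        _ = Real.sqrt r * opNorm (Matrix.of G) := mul_comm _ _
    have hsplit : ∑ i, ∑ j, G i j * (A - B) i j
        = (∑ i, ∑ j, G i j * A i j) + (-(∑ i, ∑ j, G i j * B i j)) := by
      simp only [Matrix.sub_apply, mul_sub, Finset.sum_sub_distrib]
      ring
    show ∑ i, ∑ j, G i j * (A - B) i j ≤ 2 * Real.sqrt r * opNorm (Matrix.of G)
    rw [hsplit]
    have := add_le_add hGA hGB
    linarith
  have hf_le : ∀ G : Fin d₁ → Fin d₂ → ℝ,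
      f G ≤ 2 * Real.sqrt r * opNorm (Matrix.of G) := by
    intro G
    exact Real.sSup_le (hub G)
      (mul_nonneg (by positivity) (Stmt17Aux.opNorm_nonneg _))
  have hf_nonneg : ∀ G : Fin d₁ → Fin d₂ → ℝ, 0 ≤ f G := by
    intro G
    by_cases hKe : K.Nonempty
    · obtain ⟨A, hA⟩ := hKe
      have h0 : (0:ℝ) ∈ ((fun X : Matrix (Fin d₁) (Fin d₂) ℝ =>
          ∑ i, ∑ j, G i j * X i j) '' (K - K)) := by
        refine ⟨A - A, Set.sub_mem_sub hA hA, ?_⟩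
        simp
      have hbdd : BddAbove ((fun X : Matrix (Fin d₁) (Fin d₂) ℝ =>
          ∑ i, ∑ j, G i j * X i j) '' (K - K)) :=
        ⟨2 * Real.sqrt r * opNorm (Matrix.of G), fun y hy => hub G y hy⟩
      exact le_csSup hbdd h0
    · have : K - K = ∅ := by
        rw [Set.not_nonempty_iff_eq_empty] at hKe
        simp [hKe]
      simp [hf, this, Real.sSup_empty]
  -- integrate
  have hgi : Integrable (fun G : Fin d₁ → Fin d₂ → ℝ =>
      2 * Real.sqrt r * opNorm (Matrix.of G)) (gaussMat d₁ d₂) :=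
    Stmt17Aux.integrable_opNorm.const_mul _
  have hint : matMeanWidth K ≤ ∫ G, 2 * Real.sqrt r * opNorm (Matrix.of G) ∂(gaussMat d₁ d₂) :=
    integral_mono_of_nonneg (ae_of_all _ hf_nonneg) hgi (ae_of_all _ hf_le)
  have hint2 : ∫ G, 2 * Real.sqrt r * opNorm (Matrix.of G) ∂(gaussMat d₁ d₂)
      = 2 * Real.sqrt r * ∫ G, opNorm (Matrix.of G) ∂(gaussMat d₁ d₂) :=
    integral_const_mul _ _
  have hstep : matMeanWidth K ≤ 2 * Real.sqrt r * (Real.sqrt d₁ + Real.sqrt d₂) := by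
    rw [hint2] at hint
    refine hint.trans ?_
    exact mul_le_mul_of_nonneg_left hGordon (by positivity)
  refine hstep.trans ?_
  -- final numeric bound
  have h1 : Real.sqrt d₁ + Real.sqrt d₂ ≤ Real.sqrt (2 * (d₁ + d₂)) := by
    rw [show Real.sqrt d₁ + Real.sqrt d₂
        = Real.sqrt ((Real.sqrt d₁ + Real.sqrt d₂) ^ 2) from
      (Real.sqrt_sq (by positivity)).symm]
    apply Real.sqrt_le_sqrt
    have ha : Real.sqrt d₁ ^ 2 = (d₁ : ℝ) := Real.sq_sqrt (Nat.cast_nonneg _)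
    have hb : Real.sqrt d₂ ^ 2 = (d₂ : ℝ) := Real.sq_sqrt (Nat.cast_nonneg _)
    nlinarith [sq_nonneg (Real.sqrt d₁ - Real.sqrt d₂)]
  calc 2 * Real.sqrt r * (Real.sqrt d₁ + Real.sqrt d₂)
      ≤ 2 * Real.sqrt r * Real.sqrt (2 * (d₁ + d₂)) :=
        mul_le_mul_of_nonneg_left h1 (by positivity)
    _ = 2 * Real.sqrt (2 * r * (d₁ + d₂)) := by
        rw [mul_assoc, ← Real.sqrt_mul (Nat.cast_nonneg _)]
        congr 2
        ring
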